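/- Let A ∈ ℝ^{m×n} have columns a_1,…,a_n, let R ∈ ℝ^{m×m} be symmetric positive definite with F_A ⊆ E(R), and let Q = R⁻¹. If k ∈ [n] satisfies ‖â_k‖_Q < ω_A, then k ∉ T*_A, i.e. a_kᵀy = 0 for every y with Aᵀy ≥ 0. -/

import Mathlib

open Matrix Set MeasureTheory Pointwise ENNReal

noncomputable section

/-- Euclidean dot product on `Fin d → ℝ`. -/
def dotp {d : ℕ} (u v : Fin d → ℝ) : ℝ := ∑ i, u i * v i

/-- Euclidean norm on `Fin d → ℝ`. -/
def norm2 {d : ℕ} (v : Fin d → ℝ) : ℝ := Real.sqrt (∑ i, v i ^ 2)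

/-- Normalization `v / ‖v‖`, with the convention that `0` is mapped to `0`. -/
def nml {d : ℕ} (v : Fin d → ℝ) : Fin d → ℝ := (norm2 v)⁻¹ • v

/-- The `j`-th column of a matrix. -/
def mcol {d : ℕ} {ι : Type} (A : Matrix (Fin d) ι ℝ) (j : ι) : Fin d → ℝ := fun i => A i j

/-- Goffin's condition measure `ρ_A = max_{y ∈ im(A) \ {0}} min_j â_jᵀ ŷ`. -/
def goffin {d : ℕ} {ι : Type} [Fintype ι] (A : Matrix (Fin d) ι ℝ) : ℝ :=
  sSup { r : ℝ | ∃ y : Fin d → ℝ, (∃ x : ι → ℝ, A.mulVec x = y) ∧ y ≠ 0 ∧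
    r = ⨅ j : ι, dotp (nml (mcol A j)) (nml y) }

/-- The cone `Σ_A = {y : Aᵀ y ≥ 0}`. -/
def SigmaCone {d : ℕ} {ι : Type} (A : Matrix (Fin d) ι ℝ) : Set (Fin d → ℝ) :=
  { y | ∀ j, 0 ≤ dotp (mcol A j) y }

/-- `F_A = Σ_A ∩ B^d`. -/
def FA {d : ℕ} {ι : Type} (A : Matrix (Fin d) ι ℝ) : Set (Fin d → ℝ) :=
  SigmaCone A ∩ { z | norm2 z ≤ 1 }

/-- `‖v‖_M = √(vᵀ M v)`. -/
def qnorm {d : ℕ} (M : Matrix (Fin d) (Fin d) ℝ) (v : Fin d → ℝ) : ℝ :=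
  Real.sqrt (dotp v (M.mulVec v))

/-- The ellipsoid `E(M) = {z : ‖z‖_M ≤ 1}`. -/
def ell {d : ℕ} (M : Matrix (Fin d) (Fin d) ℝ) : Set (Fin d → ℝ) :=
  { z | qnorm M z ≤ 1 }

/-- The width of a set `X` along `a`: `sup {aᵀz : z ∈ X}`. -/
def widthOf {d : ℕ} (X : Set (Fin d → ℝ)) (a : Fin d → ℝ) : ℝ :=
  sSup { r : ℝ | ∃ z ∈ X, r = dotp a z }

/-- `P_A = conv(â_1,…,â_n) ∩ (−conv(â_1,…,â_n))`. -/
def PA {d : ℕ} {ι : Type} (A : Matrix (Fin d) ι ℝ) : Set (Fin d → ℝ) :=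
  convexHull ℝ (Set.range fun j => nml (mcol A j)) ∩
    (-(convexHull ℝ (Set.range fun j => nml (mcol A j))))

/-- `Δ_A`: maximum of `∏_{j ∈ B} ‖a_j‖` over sets `B` of linearly independent columns. -/
def DeltaA {d n : ℕ} (A : Matrix (Fin d) (Fin n) ℝ) : ℝ :=
  sSup { p : ℝ | ∃ B : Finset (Fin n),
    LinearIndependent ℝ (fun j : {x // x ∈ B} => mcol A j.1) ∧ p = ∏ j ∈ B, norm2 (mcol A j) }

/-- `T*_A`: indices `i` such that some `y` with `Aᵀy ≥ 0` has `a_iᵀ y > 0`. -/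
def TstarA {d : ℕ} {ι : Type} (A : Matrix (Fin d) ι ℝ) : Set ι :=
  { i | ∃ y : Fin d → ℝ, (∀ j, 0 ≤ dotp (mcol A j) y) ∧ 0 < dotp (mcol A i) y }

/-- `S*_A`: indices `i` such that some `x ≥ 0` with `Ax = 0` has `x_i > 0`. -/
def SstarA {d : ℕ} {ι : Type} [Fintype ι] (A : Matrix (Fin d) ι ℝ) : Set ι :=
  { i | ∃ x : ι → ℝ, (∀ j, 0 ≤ x j) ∧ A.mulVec x = 0 ∧ 0 < x i }

/-- `ω_A = min_{i ∈ T*_A} width_{F_A}(â_i)`. -/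
def omegaA {d : ℕ} {ι : Type} (A : Matrix (Fin d) ι ℝ) : ℝ :=
  sInf ((fun i => widthOf (FA A) (nml (mcol A i))) '' TstarA A)


lemma cs_posdef {d : ℕ} {M : Matrix (Fin d) (Fin d) ℝ} (hM : M.PosDef) (u v : Fin d → ℝ) :
    u ⬝ᵥ (M *ᵥ v) ≤ Real.sqrt (u ⬝ᵥ (M *ᵥ u)) * Real.sqrt (v ⬝ᵥ (M *ᵥ v)) := by
  letI gN : NormedAddCommGroup (Fin d → ℝ) := Matrix.toNormedAddCommGroup M hM
  letI gS : SeminormedAddCommGroup (Fin d → ℝ) := gN.toSeminormedAddCommGroup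
  letI gI : @InnerProductSpace ℝ (Fin d → ℝ) _ gS := Matrix.toInnerProductSpace M hM.posSemidef
  have hinner : ∀ x y : Fin d → ℝ,
      (@inner ℝ (Fin d → ℝ) gI.toInner x y : ℝ) = x ⬝ᵥ (M *ᵥ y) := by
    intro x y
    show (M *ᵥ y) ⬝ᵥ star x = x ⬝ᵥ (M *ᵥ y)
    rw [star_trivial, dotProduct_comm]
  have h := @real_inner_le_norm (Fin d → ℝ) gS gI u v
  rw [@norm_eq_sqrt_real_inner (Fin d → ℝ) gS gI u,
    @norm_eq_sqrt_real_inner (Fin d → ℝ) gS gI v, hinner u v, hinner u u,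
    hinner v v] at h
  exact h

lemma dotp_le_qnorm_inv {d : ℕ} {M : Matrix (Fin d) (Fin d) ℝ} (hM : M.PosDef)
    (a z : Fin d → ℝ) (hz : qnorm M z ≤ 1) : dotp a z ≤ qnorm M⁻¹ a := by
  have hdet : IsUnit M.det := hM.det_pos.ne'.isUnit
  have hsym : Mᵀ = M := by
    ext i j
    simpa using (hM.isHermitian.apply j i).symm
  set u := M⁻¹ *ᵥ a with hu
  have hMu : M *ᵥ u = a := by
    rw [hu, Matrix.mulVec_mulVec, Matrix.mul_nonsing_inv M hdet, Matrix.one_mulVec]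
  have h1 : dotp a z = u ⬝ᵥ (M *ᵥ z) := by
    have : u ⬝ᵥ (M *ᵥ z) = (u ᵥ* M) ⬝ᵥ z := Matrix.dotProduct_mulVec u M z
    rw [this, ← Matrix.mulVec_transpose, hsym, hMu]
    simp [dotp, dotProduct]
  have h2 : u ⬝ᵥ (M *ᵥ u) = dotp a (M⁻¹ *ᵥ a) := by
    rw [hMu, dotProduct_comm]
    simp [dotp, dotProduct, hu]
  have hq0 : 0 ≤ qnorm M⁻¹ a := Real.sqrt_nonneg _
  calc dotp a z = u ⬝ᵥ (M *ᵥ z) := h1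
    _ ≤ Real.sqrt (u ⬝ᵥ (M *ᵥ u)) * Real.sqrt (z ⬝ᵥ (M *ᵥ z)) := cs_posdef hM u z
    _ = qnorm M⁻¹ a * qnorm M z := by
        rw [h2]; simp [qnorm, dotp, dotProduct, Matrix.mulVec]
    _ ≤ qnorm M⁻¹ a * 1 := by
        exact mul_le_mul_of_nonneg_left hz hq0
    _ = qnorm M⁻¹ a := mul_one _

/-- Lemma 4.6: if `F_A ⊆ E(R)` with `R` symmetric positive definite, `Q = R⁻¹`, and
`‖â_k‖_Q < ω_A`, then `k ∉ T*_A`, i.e. `a_kᵀ y = 0` for every `y` with `Aᵀ y ≥ 0`. -/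
theorem not_mem_Tstar_of_small_qnorm
    {m n : ℕ} (A : Matrix (Fin m) (Fin n) ℝ)
    (R : Matrix (Fin m) (Fin m) ℝ) (hR : R.PosDef)
    (hFE : FA A ⊆ ell R)
    (k : Fin n) (hk : qnorm R⁻¹ (nml (mcol A k)) < omegaA A) :
    k ∉ TstarA A ∧
      ∀ y : Fin m → ℝ, (∀ j, 0 ≤ dotp (mcol A j) y) → dotp (mcol A k) y = 0 := by
  have key : ∀ a : Fin m → ℝ, ∀ z ∈ FA A, dotp a z ≤ qnorm R⁻¹ a := by
    intro a z hz
    exact dotp_le_qnorm_inv hR a z (hFE hz)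
  have h0FA : (0 : Fin m → ℝ) ∈ FA A := by
    constructor
    · intro j; simp [dotp]
    · simp [norm2, Set.mem_setOf_eq]
  -- each width is between 0 and the corresponding qnorm bound
  have hbddA : ∀ a : Fin m → ℝ,
      BddAbove { r : ℝ | ∃ z ∈ FA A, r = dotp a z } :=
    fun a => ⟨qnorm R⁻¹ a, by rintro r ⟨z, hz, rfl⟩; exact key a z hz⟩
  have hw_nonneg : ∀ a : Fin m → ℝ, 0 ≤ widthOf (FA A) a := by
    intro a
    apply le_csSup (hbddA a)
    exact ⟨0, h0FA, by simp [dotp]⟩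
  have hw_le : ∀ a : Fin m → ℝ, widthOf (FA A) a ≤ qnorm R⁻¹ a := by
    intro a
    apply Real.sSup_le ?_ (Real.sqrt_nonneg _)
    rintro r ⟨z, hz, rfl⟩
    exact key a z hz
  have hkT : k ∉ TstarA A := by
    intro hmem
    have hωle : omegaA A ≤ widthOf (FA A) (nml (mcol A k)) := by
      apply csInf_le
      · exact ⟨0, by rintro r ⟨i, _, rfl⟩; exact hw_nonneg _⟩
      · exact ⟨k, hmem, rfl⟩
    exact absurd hk (not_lt.2 (hωle.trans (hw_le _)))
  refine ⟨hkT, fun y hy => ?_⟩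
  rcases (hy k).lt_or_eq with hpos | heq
  · exact absurd ⟨y, hy, hpos⟩ hkT
  · exact heq.symm
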